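/- Fix Z > 0 and α ∈ (0,1). The global minimum of f̃(ρ₀) = ρ₀^α + (e^Z/(1+ρ₀) − 1)^α over [0, e^Z − 1] is attained at one of the three points ρ₀ = 0, ρ₀ = e^Z − 1, or ρ₀ = e^{Z/2} − 1. -/

import Mathlib

open Real Set

noncomputable def ggS12 (Z α t : ℝ) : ℝ :=
  (Real.exp t - 1) ^ α + (Real.exp (Z - t) - 1) ^ α

noncomputable def mmS12 (α t : ℝ) : ℝ := t + (α - 1) * Real.log (Real.exp t - 1)

noncomputable def llS12 (Z α t : ℝ) : ℝ := mmS12 α t - mmS12 α (Z - t)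

lemma expm1_pos_S12 {t : ℝ} (h : 0 < t) : 0 < Real.exp t - 1 := by
  have : (1 : ℝ) < Real.exp t := by
    have := Real.exp_lt_exp.mpr h
    simpa [Real.exp_zero] using this
  linarith

lemma hasDerivAt_mmS12 {α t : ℝ} (h : 0 < Real.exp t - 1) :
    HasDerivAt (mmS12 α) (1 + (α - 1) * (Real.exp t / (Real.exp t - 1))) t := by
  have h1 : HasDerivAt (fun t => Real.exp t - 1) (Real.exp t) t :=
    (Real.hasDerivAt_exp t).sub_const 1
  have h2 := (h1.log h.ne')
  have := (hasDerivAt_id t).add ((h2.const_mul (α - 1)))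
  exact this

lemma hasDerivAt_llS12 {Z α t : ℝ} (ht : t ∈ Set.Ioo 0 Z) :
    HasDerivAt (llS12 Z α)
      (2 + (α - 1) * (Real.exp t / (Real.exp t - 1)
        + Real.exp (Z - t) / (Real.exp (Z - t) - 1))) t := by
  have e1 : 0 < Real.exp t - 1 := expm1_pos_S12 ht.1
  have e2 : 0 < Real.exp (Z - t) - 1 := expm1_pos_S12 (by linarith [ht.2])
  have hsub : HasDerivAt (fun t : ℝ => Z - t) (-1) t := (hasDerivAt_id t).const_sub Z
  have d2 : HasDerivAt (fun t => mmS12 α (Z - t))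
      ((1 + (α - 1) * (Real.exp (Z - t) / (Real.exp (Z - t) - 1))) * (-1)) t :=
    (hasDerivAt_mmS12 e2).comp t hsub
  have d1 := hasDerivAt_mmS12 (α := α) e1
  have := d1.sub d2
  have heq : llS12 Z α = fun t => mmS12 α t - mmS12 α (Z - t) := rfl
  rw [heq]
  refine this.congr_deriv ?_
  ring

lemma exp_mmS12 {α t : ℝ} (h : 0 < Real.exp t - 1) :
    Real.exp (mmS12 α t) = Real.exp t * (Real.exp t - 1) ^ (α - 1) := by
  rw [mmS12, Real.exp_add, Real.rpow_def_of_pos h, mul_comm (Real.log _)]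

lemma hasDerivAt_ggS12 {Z α t : ℝ} (ht : t ∈ Set.Ioo 0 Z) :
    HasDerivAt (ggS12 Z α)
      (α * Real.exp (mmS12 α t) - α * Real.exp (mmS12 α (Z - t))) t := by
  have e1 : 0 < Real.exp t - 1 := expm1_pos_S12 ht.1
  have e2 : 0 < Real.exp (Z - t) - 1 := expm1_pos_S12 (by linarith [ht.2])
  have hsub : HasDerivAt (fun t : ℝ => Z - t) (-1) t := (hasDerivAt_id t).const_sub Z
  have d1 : HasDerivAt (fun t => (Real.exp t - 1) ^ α)
      (Real.exp t * α * (Real.exp t - 1) ^ (α - 1)) t :=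
    ((Real.hasDerivAt_exp t).sub_const 1).rpow_const (Or.inl e1.ne')
  have hinner : HasDerivAt (fun t => Real.exp (Z - t) - 1) (Real.exp (Z - t) * (-1)) t :=
    ((Real.hasDerivAt_exp (Z - t)).comp t hsub).sub_const 1
  have d2 : HasDerivAt (fun t => (Real.exp (Z - t) - 1) ^ α)
      ((Real.exp (Z - t) * (-1)) * α * (Real.exp (Z - t) - 1) ^ (α - 1)) t :=
    hinner.rpow_const (Or.inl e2.ne')
  have := d1.add d2
  have heq : ggS12 Z α = fun t => (Real.exp t - 1) ^ α + (Real.exp (Z - t) - 1) ^ α := rfl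
  rw [heq]
  refine this.congr_deriv ?_
  rw [exp_mmS12 e1, exp_mmS12 e2]
  ring

lemma llS12_half {Z α : ℝ} : llS12 Z α (Z / 2) = 0 := by
  have h : Z - Z / 2 = Z / 2 := by ring
  rw [llS12, h, sub_self]

lemma lp_strictMono_S12 {Z α : ℝ} (hα1 : α < 1) {c₁ c₂ : ℝ}
    (h0 : 0 < c₁) (h12 : c₁ < c₂) (h2 : c₂ ≤ Z / 2) :
    2 + (α - 1) * (Real.exp c₁ / (Real.exp c₁ - 1)
        + Real.exp (Z - c₁) / (Real.exp (Z - c₁) - 1)) <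
      2 + (α - 1) * (Real.exp c₂ / (Real.exp c₂ - 1)
        + Real.exp (Z - c₂) / (Real.exp (Z - c₂) - 1)) := by
  set a := Real.exp c₁ with ha
  set b := Real.exp c₂ with hb
  set A := Real.exp (Z - c₁) with hA
  set B := Real.exp (Z - c₂) with hB
  set E := Real.exp Z with hE
  have hZc : c₂ < Z := by linarith
  have ha1 : 1 < a := by
    have := Real.exp_lt_exp.mpr h0; simpa [Real.exp_zero, ha] using this
  have hab : a < b := Real.exp_lt_exp.mpr h12
  have hB1 : 1 < B := by
    have : (0:ℝ) < Z - c₂ := by linarith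
    have := Real.exp_lt_exp.mpr this; simpa [Real.exp_zero, hB] using this
  have hBA : B < A := Real.exp_lt_exp.mpr (by linarith)
  have haA : a * A = E := by rw [ha, hA, hE, ← Real.exp_add]; ring_nf
  have hbB : b * B = E := by rw [hb, hB, hE, ← Real.exp_add]; ring_nf
  have habE : a * b < E := by
    rw [ha, hb, hE, ← Real.exp_add]
    exact Real.exp_lt_exp.mpr (by linarith)
  have hE1 : 1 < E := by
    have := Real.exp_lt_exp.mpr (show (0:ℝ) < Z by linarith)
    simpa [Real.exp_zero, hE] using this
  have ha0 : (0:ℝ) < a := Real.exp_pos _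
  have hb0 : (0:ℝ) < b := Real.exp_pos _
  have hEa : a < E := Real.exp_lt_exp.mpr (by linarith)
  have hEb : b < E := Real.exp_lt_exp.mpr hZc
  have hA' : A = E / a := by rw [eq_div_iff ha0.ne']; linarith [haA, mul_comm a A]
  have hB' : B = E / b := by rw [eq_div_iff hb0.ne']; linarith [hbB, mul_comm b B]
  have key : b / (b - 1) + B / (B - 1) < a / (a - 1) + A / (A - 1) := by
    have pa : (0:ℝ) < a - 1 := by linarith
    have pb : (0:ℝ) < b - 1 := by linarith
    have pB : (0:ℝ) < B - 1 := by linarith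
    have pA : (0:ℝ) < A - 1 := by linarith
    have pEa : (0:ℝ) < E - a := by linarith
    have pEb : (0:ℝ) < E - b := by linarith
    have e1 : a / (a - 1) - b / (b - 1) = (b - a) / ((a - 1) * (b - 1)) := by
      field_simp; ring
    have e2 : A / (A - 1) - B / (B - 1) = -(E * (b - a) / ((E - a) * (E - b))) := by
      rw [hA', hB']
      field_simp
      ring
    have key2 : E * (b - a) / ((E - a) * (E - b)) < (b - a) / ((a - 1) * (b - 1)) := by
      rw [div_lt_div_iff₀ (by positivity) (by positivity)]
      nlinarith [mul_pos (mul_pos (sub_pos.2 hab) (sub_pos.2 hE1)) (sub_pos.2 habE)]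
    linarith [e1, e2, key2]
  nlinarith [mul_lt_mul_of_neg_left key (show α - 1 < 0 by linarith)]

lemma cont_ggS12 {Z α : ℝ} (hα0 : 0 ≤ α) : Continuous (ggS12 Z α) := by
  have h : Continuous fun x : ℝ => x ^ α :=
    continuous_iff_continuousAt.mpr fun x => Real.continuousAt_rpow_const x α (Or.inr hα0)
  exact (h.comp (Real.continuous_exp.sub continuous_const)).add
    (h.comp ((Real.continuous_exp.comp (continuous_const.sub continuous_id)).sub
      continuous_const))

lemma gg_min_S12 {Z α : ℝ} (hZ : 0 < Z) (hα0 : 0 < α) (hα1 : α < 1) :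
    ∀ t ∈ Set.Icc 0 Z, min (ggS12 Z α 0) (ggS12 Z α (Z / 2)) ≤ ggS12 Z α t := by
  have contg := (cont_ggS12 (Z := Z) hα0.le).continuousOn (s := Set.univ)
  have contL : ∀ {s u : ℝ}, 0 < s → u ≤ Z / 2 → ContinuousOn (llS12 Z α) (Set.Icc s u) := by
    intro s u hs hu
    intro x hx
    exact ((hasDerivAt_llS12 ⟨lt_of_lt_of_le hs hx.1,
      lt_of_le_of_lt (le_trans hx.2 hu) (by linarith)⟩).continuousAt).continuousWithinAt
  set v : ℝ → ℝ := fun t => 2 + (α - 1) * (Real.exp t / (Real.exp t - 1)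
        + Real.exp (Z - t) / (Real.exp (Z - t) - 1)) with hv
  have hderL : ∀ x ∈ Set.Ioo (0:ℝ) Z, HasDerivAt (llS12 Z α) (v x) x :=
    fun x hx => hasDerivAt_llS12 hx
  have half : ∀ t, 0 < t → t < Z / 2 →
      min (ggS12 Z α 0) (ggS12 Z α (Z / 2)) ≤ ggS12 Z α t := by
    intro t ht0 htZ
    have htZ' : t < Z := by linarith
    by_cases hL : 0 ≤ llS12 Z α t
    · refine le_trans (min_le_left _ _) ?_
      obtain ⟨c, hc, hceq⟩ := exists_hasDerivAt_eq_slope (ggS12 Z α)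
        (fun s => α * Real.exp (mmS12 α s) - α * Real.exp (mmS12 α (Z - s))) ht0
        ((cont_ggS12 hα0.le).continuousOn)
        (fun x hx => hasDerivAt_ggS12 ⟨hx.1, by linarith [hx.2]⟩)
      have hLc : 0 ≤ llS12 Z α c := by
        by_contra hneg
        push_neg at hneg
        obtain ⟨d₁, hd₁, hd₁eq⟩ := exists_hasDerivAt_eq_slope (llS12 Z α) v hc.2
          (contL hc.1 (by linarith)) (fun x hx => hderL x ⟨lt_trans hc.1 hx.1, by linarith [hx.2]⟩)
        obtain ⟨d₂, hd₂, hd₂eq⟩ := exists_hasDerivAt_eq_slope (llS12 Z α) v htZ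
          (contL ht0 le_rfl) (fun x hx => hderL x ⟨lt_trans ht0 hx.1, by linarith [hx.2]⟩)
        have h1 : 0 < v d₁ := by
          rw [hd₁eq]
          exact div_pos (by linarith) (by linarith [hc.2])
        have h2 : v d₂ ≤ 0 := by
          rw [hd₂eq, llS12_half]
          apply div_nonpos_iff.mpr
          right
          constructor <;> [linarith; linarith [hd₂.2]]
        have := lp_strictMono_S12 (Z := Z) hα1 (lt_trans hc.1 hd₁.1)
          (lt_trans hd₁.2 hd₂.1) hd₂.2.le
        have h3 : v d₁ < v d₂ := this
        linarith
      have hsign : 0 ≤ α * Real.exp (mmS12 α c) - α * Real.exp (mmS12 α (Z - c)) := by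
        have : Real.exp (mmS12 α (Z - c)) ≤ Real.exp (mmS12 α c) :=
          Real.exp_le_exp.mpr (by have := hLc; rw [llS12] at this; linarith)
        nlinarith
      rw [hceq] at hsign
      rw [le_div_iff₀ (by linarith : (0:ℝ) < t - 0)] at hsign
      linarith
    · push_neg at hL
      refine le_trans (min_le_right _ _) ?_
      obtain ⟨c, hc, hceq⟩ := exists_hasDerivAt_eq_slope (ggS12 Z α)
        (fun s => α * Real.exp (mmS12 α s) - α * Real.exp (mmS12 α (Z - s))) htZ
        ((cont_ggS12 hα0.le).continuousOn)
        (fun x hx => hasDerivAt_ggS12 ⟨lt_trans ht0 hx.1, by linarith [hx.2]⟩)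
      have hLc : llS12 Z α c ≤ 0 := by
        by_contra hneg
        push_neg at hneg
        obtain ⟨d₁, hd₁, hd₁eq⟩ := exists_hasDerivAt_eq_slope (llS12 Z α) v hc.1
          (contL ht0 (le_of_lt hc.2)) (fun x hx => hderL x ⟨lt_trans ht0 hx.1, by linarith [hx.2, hc.2]⟩)
        obtain ⟨d₂, hd₂, hd₂eq⟩ := exists_hasDerivAt_eq_slope (llS12 Z α) v hc.2
          (contL (lt_trans ht0 hc.1) le_rfl)
          (fun x hx => hderL x ⟨lt_trans (lt_trans ht0 hc.1) hx.1, by linarith [hx.2]⟩)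
        have h1 : 0 < v d₁ := by
          rw [hd₁eq]
          exact div_pos (by linarith) (by linarith [hc.1])
        have h2 : v d₂ < 0 := by
          rw [hd₂eq, llS12_half]
          apply div_neg_of_neg_of_pos (by linarith) (by linarith [hc.2, hd₂.2])
        have := lp_strictMono_S12 (Z := Z) hα1 (lt_trans ht0 hd₁.1)
          (lt_trans hd₁.2 hd₂.1) hd₂.2.le
        have h3 : v d₁ < v d₂ := this
        linarith
      have hsign : α * Real.exp (mmS12 α c) - α * Real.exp (mmS12 α (Z - c)) ≤ 0 := by
        have : Real.exp (mmS12 α c) ≤ Real.exp (mmS12 α (Z - c)) :=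
          Real.exp_le_exp.mpr (by have := hLc; rw [llS12] at this; linarith)
        nlinarith
      rw [hceq] at hsign
      rw [div_nonpos_iff] at hsign
      rcases hsign with ⟨h1, h2⟩ | ⟨h1, h2⟩
      · linarith
      · linarith
  have hsym : ∀ t : ℝ, ggS12 Z α (Z - t) = ggS12 Z α t := by
    intro t
    have e : Z - (Z - t) = t := by ring
    rw [ggS12, ggS12, e, add_comm]
  intro t ht
  rcases le_or_gt t (Z / 2) with h | h
  · rcases eq_or_lt_of_le ht.1 with h0 | h0
    · rw [← h0]
      exact min_le_left _ _
    · rcases eq_or_lt_of_le h with h1 | h1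
      · rw [h1]
        exact min_le_right _ _
      · exact half t h0 h1
  · rw [← hsym t]
    have h0 : 0 ≤ Z - t := by linarith [ht.2]
    rcases eq_or_lt_of_le h0 with h0' | h0'
    · rw [← h0']
      exact min_le_left _ _
    · exact half (Z - t) h0' (by linarith)

theorem stmt_12 (Z α : ℝ) (hZ : 0 < Z) (hα : α ∈ Set.Ioo (0 : ℝ) 1) :
    IsMinOn (fun ρ : ℝ => ρ ^ α + (Real.exp Z / (1 + ρ) - 1) ^ α)
        (Set.Icc 0 (Real.exp Z - 1)) 0 ∨
      IsMinOn (fun ρ : ℝ => ρ ^ α + (Real.exp Z / (1 + ρ) - 1) ^ α)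
        (Set.Icc 0 (Real.exp Z - 1)) (Real.exp Z - 1) ∨
      IsMinOn (fun ρ : ℝ => ρ ^ α + (Real.exp Z / (1 + ρ) - 1) ^ α)
        (Set.Icc 0 (Real.exp Z - 1)) (Real.exp (Z / 2) - 1) := by
  obtain ⟨hα0, hα1⟩ := hα
  set f : ℝ → ℝ := fun ρ => ρ ^ α + (Real.exp Z / (1 + ρ) - 1) ^ α with hf
  have hkey : ∀ ρ ∈ Set.Icc (0:ℝ) (Real.exp Z - 1),
      min (ggS12 Z α 0) (ggS12 Z α (Z / 2)) ≤ f ρ := by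
    intro ρ hρ
    have hρ1 : (0:ℝ) ≤ ρ := hρ.1
    have hρpos : (0:ℝ) < 1 + ρ := by linarith
    set t := Real.log (1 + ρ) with htdef
    have he : Real.exp t = 1 + ρ := Real.exp_log hρpos
    have ht0 : 0 ≤ t := Real.log_nonneg (by linarith)
    have htZ : t ≤ Z := (Real.log_le_iff_le_exp hρpos).mpr (by linarith [hρ.2])
    have hfg : f ρ = ggS12 Z α t := by
      show ρ ^ α + (Real.exp Z / (1 + ρ) - 1) ^ α
          = (Real.exp t - 1) ^ α + (Real.exp (Z - t) - 1) ^ α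
      rw [Real.exp_sub, he]
      have : (1 + ρ) - 1 = ρ := by ring
      rw [this]
    rw [hfg]
    exact gg_min_S12 hZ hα0 hα1 t ⟨ht0, htZ⟩
  have h0 : ggS12 Z α 0 = f 0 := by
    show (Real.exp 0 - 1) ^ α + (Real.exp (Z - 0) - 1) ^ α
        = (0:ℝ) ^ α + (Real.exp Z / (1 + 0) - 1) ^ α
    norm_num [Real.exp_zero]
  have hhalf : ggS12 Z α (Z / 2) = f (Real.exp (Z / 2) - 1) := by
    show (Real.exp (Z / 2) - 1) ^ α + (Real.exp (Z - Z / 2) - 1) ^ α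
        = (Real.exp (Z / 2) - 1) ^ α
          + (Real.exp Z / (1 + (Real.exp (Z / 2) - 1)) - 1) ^ α
    have e1 : Z - Z / 2 = Z / 2 := by ring
    have e2 : (1:ℝ) + (Real.exp (Z / 2) - 1) = Real.exp (Z / 2) := by ring
    have e3 : Real.exp Z / Real.exp (Z / 2) = Real.exp (Z / 2) := by
      rw [← Real.exp_sub, e1]
    rw [e1, e2, e3]
  rcases le_total (f 0) (f (Real.exp (Z / 2) - 1)) with hle | hle
  · left
    rw [isMinOn_iff]
    intro ρ hρ
    have := hkey ρ hρ
    rw [h0, hhalf, min_eq_left hle] at this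
    exact this
  · right; right
    rw [isMinOn_iff]
    intro ρ hρ
    have := hkey ρ hρ
    rw [h0, hhalf, min_eq_right hle] at this
    exact this
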